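/- For n ≥ 2 identical linear servers and any α ≥ 0, the scheduling profile x* with x*_1 = max{0, 1 − α(n−1)/(2n)} and x*_i = (n − x*_1)/(n−1) for all i > 1 minimizes C^α over all scheduling profiles x with x ≥ 0 and Σ_i x_i = n. -/

import Mathlib

open Finset

/-- System cost `C^α(x) = (1/n) ∑ᵢ xᵢ τᵢ(xᵢ) + α x₁ / n` (server 1 is index 0). -/
noncomputable def cost (n : ℕ) [NeZero n] (τ : Fin n → ℝ → ℝ) (α : ℝ) (x : Fin n → ℝ) : ℝ :=
  (∑ i, x i * τ i (x i)) / (n : ℝ) + α * x 0 / (n : ℝ)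

/-- Attacked delay functions: `τ₁^α = τ₁ + α`, `τᵢ^α = τᵢ` for `i > 1`. -/
noncomputable def tauA (n : ℕ) [NeZero n] (τ : Fin n → ℝ → ℝ) (α : ℝ) (i : Fin n) (z : ℝ) : ℝ :=
  τ i z + if i = 0 then α else 0

/-- A (partial) scheduling profile of total mass `mass`: nonnegative with entries summing to `mass`. -/
def IsProfile (n : ℕ) (mass : ℝ) (x : Fin n → ℝ) : Prop :=
  (∀ i, 0 ≤ x i) ∧ ∑ i, x i = mass

/-- Identical linear delay functions `τᵢ(x) = x`. -/
def lin (n : ℕ) : Fin n → ℝ → ℝ := fun _ z => z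

set_option maxHeartbeats 1000000 in
/-- for identical linear servers, the profile with
`x*₁ = max {0, 1 − α(n−1)/(2n)}` and the rest split evenly minimizes `C^α`. -/
theorem linear_optimal_profile (n : ℕ) [NeZero n] (hn : 2 ≤ n) (α : ℝ) (hα : 0 ≤ α) :
    IsProfile n (n : ℝ)
      (fun i : Fin n => if i = 0 then max 0 (1 - α * ((n : ℝ) - 1) / (2 * n))
        else ((n : ℝ) - max 0 (1 - α * ((n : ℝ) - 1) / (2 * n))) / ((n : ℝ) - 1)) ∧
    ∀ x : Fin n → ℝ, IsProfile n (n : ℝ) x →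
      cost n (lin n) α
        (fun i : Fin n => if i = 0 then max 0 (1 - α * ((n : ℝ) - 1) / (2 * n))
          else ((n : ℝ) - max 0 (1 - α * ((n : ℝ) - 1) / (2 * n))) / ((n : ℝ) - 1))
        ≤ cost n (lin n) α x := by
  have hN : (2:ℝ) ≤ (n:ℝ) := by exact_mod_cast hn
  set t : ℝ := max 0 (1 - α * ((n : ℝ) - 1) / (2 * n)) with ht
  have hNpos : (0:ℝ) < n := by linarith
  have hN1 : (0:ℝ) < (n:ℝ) - 1 := by linarith
  have ht0 : 0 ≤ t := le_max_left _ _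
  have ht1 : t ≤ 1 := by
    apply max_le (by norm_num)
    have : 0 ≤ α * ((n : ℝ) - 1) / (2 * n) := by positivity
    linarith
  have hcard : ((Finset.univ.erase (0 : Fin n)).card : ℝ) = (n:ℝ) - 1 := by
    rw [Finset.card_erase_of_mem (Finset.mem_univ _), Finset.card_univ, Fintype.card_fin]
    have h1 : 1 ≤ n := by omega
    push_cast [Nat.cast_sub h1]
    ring
  -- generic sum split
  have hsplit : ∀ f : Fin n → ℝ, ∑ i, f i = f 0 + ∑ i ∈ Finset.univ.erase 0, f i := by
    intro f
    rw [← Finset.add_sum_erase _ f (Finset.mem_univ 0)]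
  -- the star profile
  set xs : Fin n → ℝ := fun i : Fin n => if i = 0 then t
    else ((n : ℝ) - t) / ((n : ℝ) - 1) with hxs
  have hxs0 : xs 0 = t := by simp [hxs]
  have hxsi : ∀ i ∈ Finset.univ.erase (0 : Fin n), xs i = ((n : ℝ) - t) / ((n : ℝ) - 1) := by
    intro i hi
    simp [hxs, Finset.mem_erase.mp hi |>.1]
  have hsum : ∑ i, xs i = (n : ℝ) := by
    rw [hsplit xs, hxs0, Finset.sum_congr rfl hxsi, Finset.sum_const, nsmul_eq_mul, hcard]
    field_simp
    ring
  have hprof : IsProfile n (n : ℝ) xs := by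
    constructor
    · intro i
      by_cases h : i = 0
      · simp [hxs, h, ht0]
      · simp only [hxs, h, if_false]
        apply div_nonneg (by linarith) (by linarith)
    · exact hsum
  refine ⟨hprof, ?_⟩
  intro x hx
  obtain ⟨hx0, hxsum⟩ := hx
  -- sum of squares for xs
  have hsqs : ∑ i, xs i * xs i = t^2 + ((n:ℝ) - t)^2 / ((n:ℝ) - 1) := by
    rw [hsplit (fun i => xs i * xs i)]
    simp only [hxs0]
    rw [Finset.sum_congr rfl (fun i hi => by rw [hxsi i hi]), Finset.sum_const,
      nsmul_eq_mul, hcard]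
    field_simp
  -- Cauchy on x
  have hC : ((n:ℝ) - x 0)^2 ≤ ((n:ℝ) - 1) * ∑ i ∈ Finset.univ.erase 0, (x i)^2 := by
    have := sq_sum_le_card_mul_sum_sq (s := Finset.univ.erase (0 : Fin n)) (f := x)
    have hrest : ∑ i ∈ Finset.univ.erase 0, x i = (n:ℝ) - x 0 := by
      have := hsplit x
      rw [hxsum] at this
      linarith
    rw [hrest] at this
    calc ((n:ℝ) - x 0)^2 ≤ (Finset.univ.erase (0:Fin n)).card * ∑ i ∈ Finset.univ.erase 0, (x i)^2 := this
      _ = ((n:ℝ) - 1) * ∑ i ∈ Finset.univ.erase 0, (x i)^2 := by rw [hcard]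
  have hsqx : (x 0)^2 + ((n:ℝ) - x 0)^2 / ((n:ℝ) - 1) ≤ ∑ i, x i * x i := by
    rw [hsplit (fun i => x i * x i)]
    have h1 : ((n:ℝ) - x 0)^2 / ((n:ℝ) - 1) ≤ ∑ i ∈ Finset.univ.erase 0, x i * x i := by
      rw [div_le_iff₀ hN1]
      simp only [← sq]
      linarith [hC]
    nlinarith [sq_nonneg (x 0)]
  -- scalar inequality: f(t) ≤ f(b) for b = x 0 ≥ 0
  have key : t^2 + ((n:ℝ) - t)^2 / ((n:ℝ) - 1) + α * t ≤
      (x 0)^2 + ((n:ℝ) - x 0)^2 / ((n:ℝ) - 1) + α * (x 0) := by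
    set b := x 0 with hb
    have hb0 : 0 ≤ b := hx0 0
    have expand : ∀ s : ℝ, s^2 + ((n:ℝ) - s)^2 / ((n:ℝ) - 1) + α * s
        = (s^2 * ((n:ℝ)-1) + ((n:ℝ) - s)^2 + α * s * ((n:ℝ)-1)) / ((n:ℝ) - 1) := by
      intro s
      field_simp
    rw [expand t, expand b, div_le_div_iff_of_pos_right hN1]
    rcases le_or_gt (1 - α * ((n : ℝ) - 1) / (2 * n)) 0 with hc | hc
    · have ht' : t = 0 := max_eq_left hc
      have hge : 2 * (n:ℝ) ≤ α * ((n:ℝ) - 1) := by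
        have h2n : (0:ℝ) < 2 * n := by positivity
        rw [sub_nonpos, le_div_iff₀ h2n] at hc
        linarith
      rw [ht']
      nlinarith [sq_nonneg b, hb0, mul_nonneg hb0 (sub_nonneg.mpr hge)]
    · have ht' : t = 1 - α * ((n : ℝ) - 1) / (2 * n) := max_eq_right hc.le
      have hteq : t * (2 * (n:ℝ)) = 2 * (n:ℝ) - α * ((n:ℝ) - 1) := by
        rw [ht']
        field_simp
      nlinarith [mul_nonneg hNpos.le (sq_nonneg (b - t)), hteq]
  -- finish
  have final : (∑ i, xs i * xs i) + α * xs 0 ≤ (∑ i, x i * x i) + α * x 0 := by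
    rw [hsqs, hxs0]
    linarith [hsqx, key]
  simp only [cost, lin]
  rw [← add_div, ← add_div, div_le_div_iff_of_pos_right hNpos]
  simpa [hxs] using final
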